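/- arXiv:1509.07234 — 2 statements merged into one kernel-verified Lean document; each statement's English description precedes it below -/
import Mathlib

section
/- Let ε > 0 and let φ : ℝ → [0,∞) satisfy the four penalty conditions (in particular φ'' ≤ 0 and φ' > 0 on (0,∞)). Then for every x ≠ 0, the strict inequality (φ'(√ε)/(2√ε))·x² + φ(√ε) > φ(√(x²+ε)) holds. -/
/-- For `ε > 0` and `φ : ℝ → [0,∞)` satisfying the four penalty conditions
(in particular `φ'' ≤ 0` and `φ' > 0` on `(0,∞)`), the strict inequality
`(φ'(√ε)/(2√ε))x² + φ(√ε) > φ(√(x²+ε))` holds for every `x ≠ 0`. -/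
theorem stmt_3 (ε : ℝ) (hε : 0 < ε) (φ : ℝ → ℝ)
    (hφ_nonneg : ∀ u, 0 ≤ φ u)
    (hφ_cont : Continuous φ)
    (hφ_C2 : ContDiffOn ℝ 2 φ {(0 : ℝ)}ᶜ)
    (hφ_even : ∀ u, φ (-u) = φ u)
    (hφ_mono : MonotoneOn φ (Set.Ici (0 : ℝ)))
    (hφ_conc : ConcaveOn ℝ (Set.Ici (0 : ℝ)) φ)
    (hφ_d2 : ∀ x ∈ Set.Ioi (0 : ℝ), deriv (deriv φ) x ≤ 0)
    (hφ_d1 : ∀ x ∈ Set.Ioi (0 : ℝ), 0 < deriv φ x) :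
    ∀ x : ℝ, x ≠ 0 →
      deriv φ (Real.sqrt ε) / (2 * Real.sqrt ε) * x ^ 2 + φ (Real.sqrt ε) >
        φ (Real.sqrt (x ^ 2 + ε)) := by
  intro x hx
  set s := Real.sqrt ε with hs
  set t := Real.sqrt (x ^ 2 + ε) with ht
  have hx2 : 0 < x ^ 2 := by positivity
  have hs0 : 0 < s := Real.sqrt_pos.mpr hε
  have hst : s < t := by
    apply Real.sqrt_lt_sqrt hε.le
    linarith
  have ht0 : 0 < t := hs0.trans hst
  have hs2 : s ^ 2 = ε := Real.sq_sqrt hε.le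
  have ht2 : t ^ 2 = x ^ 2 + ε := Real.sq_sqrt (by positivity)
  have hxts : x ^ 2 = t ^ 2 - s ^ 2 := by rw [hs2, ht2]; ring
  have hopen : IsOpen ({(0 : ℝ)}ᶜ) := isOpen_compl_singleton
  -- differentiability of φ on the positive axis
  have hdiff : ∀ y : ℝ, 0 < y → DifferentiableAt ℝ φ y := by
    intro y hy
    have : ContDiffAt ℝ 2 φ y :=
      (hφ_C2.contDiffAt (hopen.mem_nhds (by simp [ne_of_gt hy])))
    exact this.differentiableAt two_ne_zero
  -- deriv φ is C¹ on {0}ᶜ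
  have hC1 : ContDiffOn ℝ 1 (deriv φ) ({(0 : ℝ)}ᶜ) :=
    hφ_C2.deriv_of_isOpen hopen (by norm_num)
  have hmono : Set.Ioi (0:ℝ) ⊆ ({(0:ℝ)}ᶜ) := by
    intro y hy; simp [ne_of_gt (Set.mem_Ioi.mp hy)]
  -- deriv φ is antitone on Ioi 0
  have hanti : AntitoneOn (deriv φ) (Set.Ioi (0:ℝ)) := by
    apply antitoneOn_of_deriv_nonpos (convex_Ioi 0)
      ((hC1.continuousOn).mono hmono)
    · intro y hy
      rw [interior_Ioi] at hy
      have : ContDiffAt ℝ 1 (deriv φ) y :=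
        hC1.contDiffAt (hopen.mem_nhds (hmono hy))
      exact (this.differentiableAt one_ne_zero).differentiableWithinAt
    · intro y hy
      rw [interior_Ioi] at hy
      exact hφ_d2 y hy
  -- MVT on [s, t]
  obtain ⟨c, hc, hceq⟩ := exists_hasDerivAt_eq_slope φ (deriv φ) hst
    (hφ_cont.continuousOn)
    (fun y hy => (hdiff y (hs0.trans hy.1)).hasDerivAt)
  have hc0 : 0 < c := hs0.trans hc.1
  have hle : deriv φ c ≤ deriv φ s := hanti (Set.mem_Ioi.mpr hs0)
    (Set.mem_Ioi.mpr hc0) hc.1.le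
  have hslope : φ t - φ s = deriv φ c * (t - s) := by
    rw [eq_div_iff (by linarith : t - s ≠ 0)] at hceq
    linarith
  have hds : 0 < deriv φ s := hφ_d1 s (Set.mem_Ioi.mpr hs0)
  have hkey : φ t ≤ φ s + deriv φ s * (t - s) := by
    nlinarith [hle, sub_pos.mpr hst]
  -- strict gap: deriv φ s * (t - s) < deriv φ s / (2s) * (t² - s²)
  have hgap : deriv φ s * (t - s) < deriv φ s / (2 * s) * (t ^ 2 - s ^ 2) := by
    rw [div_mul_eq_mul_div, lt_div_iff₀ (by positivity)]
    nlinarith [mul_pos (mul_pos hds (sub_pos.mpr hst)) (sub_pos.mpr hst)]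
  rw [hxts]
  linarith
end

section
/- Let N ≥ 2, let A and B be N×N real matrices with A invertible, let R be an (N−1)×N real matrix, and let Λ be an (N−1)×(N−1) real matrix. Suppose M₂ = BᵀB + Aᵀ Rᵀ Λ R A is invertible. Then M₁ = A⁻ᵀ Bᵀ B A⁻¹ + Rᵀ Λ R is invertible, and M₁⁻¹ · A⁻ᵀ Bᵀ B A⁻¹ = A · M₂⁻¹ · Bᵀ B A⁻¹. -/
open Matrix

/-- With `A` invertible and `M₂ = BᵀB + AᵀRᵀΛRA` invertible, the matrix
`M₁ = A⁻ᵀBᵀBA⁻¹ + RᵀΛR` is invertible and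
`M₁⁻¹·A⁻ᵀBᵀBA⁻¹ = A·M₂⁻¹·BᵀBA⁻¹`. -/
theorem stmt_15 (N : ℕ) (hN : 2 ≤ N)
    (A B : Matrix (Fin N) (Fin N) ℝ) (hA : IsUnit A.det)
    (R : Matrix (Fin (N - 1)) (Fin N) ℝ)
    (Λ : Matrix (Fin (N - 1)) (Fin (N - 1)) ℝ)
    (M₁ M₂ : Matrix (Fin N) (Fin N) ℝ)
    (hM₁ : M₁ = (A⁻¹)ᵀ * Bᵀ * B * A⁻¹ + Rᵀ * Λ * R)
    (hM₂ : M₂ = Bᵀ * B + Aᵀ * Rᵀ * Λ * R * A)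
    (hM₂_inv : IsUnit M₂.det) :
    IsUnit M₁.det ∧
      M₁⁻¹ * ((A⁻¹)ᵀ * Bᵀ * B * A⁻¹) = A * M₂⁻¹ * (Bᵀ * B * A⁻¹) := by
  have hAT : IsUnit Aᵀ.det := by rwa [Matrix.det_transpose]
  have hATA : (A⁻¹)ᵀ * Aᵀ = 1 := by
    rw [← Matrix.transpose_mul, Matrix.mul_nonsing_inv A hA, Matrix.transpose_one]
  have hkey : M₁ = (A⁻¹)ᵀ * M₂ * A⁻¹ := by
    rw [hM₁, hM₂]
    rw [Matrix.mul_add, Matrix.add_mul]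
    congr 1
    · noncomm_ring
    · simp only [Matrix.mul_assoc]
      rw [Matrix.mul_nonsing_inv A hA, Matrix.mul_one, ← Matrix.mul_assoc A⁻¹ᵀ Aᵀ,
        hATA, Matrix.one_mul]
  have hdet : IsUnit M₁.det := by
    rw [hkey, Matrix.det_mul, Matrix.det_mul, Matrix.det_transpose]
    have hAi : IsUnit (A⁻¹).det := by
      rw [Matrix.det_nonsing_inv]; exact isUnit_ringInverse.mpr hA
    exact (hAi.mul hM₂_inv).mul hAi
  refine ⟨hdet, ?_⟩
  have hinv : M₁⁻¹ = A * M₂⁻¹ * Aᵀ := by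
    rw [hkey, Matrix.mul_inv_rev, Matrix.mul_inv_rev,
      Matrix.nonsing_inv_nonsing_inv A hA, ← Matrix.transpose_nonsing_inv,
      Matrix.nonsing_inv_nonsing_inv A hA, Matrix.mul_assoc]
  rw [hinv]
  calc A * M₂⁻¹ * Aᵀ * ((A⁻¹)ᵀ * Bᵀ * B * A⁻¹)
      = A * M₂⁻¹ * (Aᵀ * (A⁻¹)ᵀ) * (Bᵀ * B * A⁻¹) := by noncomm_ring
    _ = A * M₂⁻¹ * (Bᵀ * B * A⁻¹) := by
        rw [← Matrix.transpose_mul, Matrix.nonsing_inv_mul A hA, Matrix.transpose_one,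
          Matrix.mul_one]
end
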